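/- For every even integer r ≥ 4, every r-regular graph admits a zero-sum 3-flow. -/

import Mathlib

open Finset SimpleGraph

section Main
variable {V : Type*} [Fintype V] [DecidableEq V]

lemma card_fst_fiber (B : Finset (V × V)) (v : V) :
    #(univ.filter fun u => (v, u) ∈ B) = #(B.filter fun a => a.1 = v) := by
  apply Finset.card_nbij (fun u => (v, u))
  · intro u hu
    simp only [mem_coe, mem_filter, mem_univ, true_and] at hu
    exact mem_filter.mpr ⟨hu, rfl⟩
  · intro a _ b _ h
    simpa using h
  · rintro ⟨a, b⟩ hab
    simp only [coe_filter, Set.mem_setOf_eq, mem_univ, true_and] at hab ⊢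
    obtain ⟨h1, h2⟩ := hab
    subst h2
    exact ⟨b, h1, rfl⟩

lemma card_snd_fiber (B : Finset (V × V)) (v : V) :
    #(univ.filter fun u => (u, v) ∈ B) = #(B.filter fun a => a.2 = v) := by
  apply Finset.card_nbij (fun u => (u, v))
  · intro u hu
    simp only [mem_coe, mem_filter, mem_univ, true_and] at hu
    exact mem_filter.mpr ⟨hu, rfl⟩
  · intro a _ b _ h
    simpa using h
  · rintro ⟨a, b⟩ hab
    simp only [coe_filter, Set.mem_setOf_eq, mem_univ, true_and] at hab ⊢
    obtain ⟨h1, h2⟩ := hab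
    subst h2
    exact ⟨a, h1, rfl⟩


/-- Key induction: an arc set with all out-degrees and in-degrees equal to `j ≥ 1`
admits an edge labeling by values in `{±1, ±2}` whose "symmetrized" vertex sums
are all `2*c`, for any admissible `c`. -/
lemma stepII :
    ∀ j : ℕ, ∀ B : Finset (V × V),
      (∀ v, #(B.filter fun a => a.1 = v) = j) →
      (∀ v, #(B.filter fun a => a.2 = v) = j) →
      ∀ c : ℤ, (c ≠ 0 ∨ 2 ≤ j) → c.natAbs ≤ j → 1 ≤ j →
      ∃ g : V × V → ℤ,
        (∀ a ∈ B, g a = 1 ∨ g a = -1 ∨ g a = 2 ∨ g a = -2) ∧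
        (∀ a ∉ B, g a = 0) ∧
        (∀ v : V, ∑ u : V, (g (v, u) + g (u, v)) = 2 * c) := by
  intro j
  induction j with
  | zero => intro B _ _ c _ _ h1; omega
  | succ j ih =>
    intro B hout hin c hc hcle _
    by_cases hj : j = 0
    · -- base case: out/in degrees all equal 1
      subst hj
      have hc0 : c ≠ 0 := by
        rcases hc with h | h
        · exact h
        · omega
      refine ⟨fun a => if a ∈ B then c else 0, ?_, ?_, ?_⟩
      · intro a ha
        simp only [if_pos ha]
        omega
      · intro a ha
        simp [ha]
      · intro v
        rw [Finset.sum_add_distrib]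
        have h1 : ∑ x : V, (if (v, x) ∈ B then c else 0)
            = #(univ.filter fun u => (v, u) ∈ B) • c := by
          rw [Finset.sum_ite, Finset.sum_const, Finset.sum_const, smul_zero, add_zero]
        have h2 : ∑ x : V, (if (x, v) ∈ B then c else 0)
            = #(univ.filter fun u => (u, v) ∈ B) • c := by
          rw [Finset.sum_ite, Finset.sum_const, Finset.sum_const, smul_zero, add_zero]
        simp only []
        rw [h1, h2, card_fst_fiber, card_snd_fiber, hout, hin]
        push_cast
        ring
    · -- inductive step: j ≥ 1
      have hj1 : 1 ≤ j := by omega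
      -- Hall's condition for the out-neighborhood family
      set t : V → Finset V := fun v => (B.filter fun a => a.1 = v).image Prod.snd with ht
      have hall : ∀ S : Finset V, #S ≤ #(S.biUnion t) := by
        intro S
        set N := S.biUnion t with hN
        have key1 : #(B.filter fun a => a.1 ∈ S) = #S * (j + 1) := by
          rw [Finset.card_eq_sum_card_fiberwise (f := Prod.fst) (s := B.filter fun a => a.1 ∈ S) (t := S)
            (fun a ha => (mem_filter.mp ha).2)]
          have : ∀ v ∈ S, #((B.filter fun a => a.1 ∈ S).filter fun a => a.1 = v)
              = j + 1 := by
            intro v hv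
            rw [Finset.filter_filter]
            rw [show (B.filter fun a => a.1 ∈ S ∧ a.1 = v) = B.filter fun a => a.1 = v from
              Finset.filter_congr (by rintro ⟨x, y⟩ _; simp only [Prod.fst]
                                      constructor
                                      · exact fun h => h.2
                                      · exact fun h => ⟨h ▸ hv, h⟩)]
            exact hout v
          rw [Finset.sum_congr rfl this, Finset.sum_const, smul_eq_mul]
        have key2 : #(B.filter fun a => a.2 ∈ N) = #N * (j + 1) := by
          rw [Finset.card_eq_sum_card_fiberwise (f := Prod.snd) (s := B.filter fun a => a.2 ∈ N) (t := N)
            (fun a ha => (mem_filter.mp ha).2)]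
          have : ∀ v ∈ N, #((B.filter fun a => a.2 ∈ N).filter fun a => a.2 = v)
              = j + 1 := by
            intro v hv
            rw [Finset.filter_filter]
            rw [show (B.filter fun a => a.2 ∈ N ∧ a.2 = v) = B.filter fun a => a.2 = v from
              Finset.filter_congr (by rintro ⟨x, y⟩ _; simp only [Prod.snd]
                                      constructor
                                      · exact fun h => h.2
                                      · exact fun h => ⟨h ▸ hv, h⟩)]
            exact hin v
          rw [Finset.sum_congr rfl this, Finset.sum_const, smul_eq_mul]
        have hsub : (B.filter fun a => a.1 ∈ S) ⊆ (B.filter fun a => a.2 ∈ N) := by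
          rintro ⟨x, y⟩ hxy
          rw [mem_filter] at hxy ⊢
          refine ⟨hxy.1, ?_⟩
          rw [hN, Finset.mem_biUnion]
          refine ⟨x, hxy.2, ?_⟩
          rw [ht]
          exact Finset.mem_image.mpr ⟨(x, y), mem_filter.mpr ⟨hxy.1, rfl⟩, rfl⟩
        have := Finset.card_le_card hsub
        rw [key1, key2] at this
        exact Nat.le_of_mul_le_mul_right this (by omega)
      obtain ⟨x, hxinj, hxmem⟩ :=
        (Finset.all_card_le_biUnion_card_iff_exists_injective t).mp hall
      have hxB : ∀ v, (v, x v) ∈ B := by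
        intro v
        have := hxmem v
        rw [ht] at this
        simp only [Finset.mem_image, mem_filter] at this
        obtain ⟨a, ⟨haB, ha1⟩, ha2⟩ := this
        have : a = (v, x v) := Prod.ext ha1 ha2
        rwa [this] at haB
      have hxbij : Function.Bijective x := (Finite.injective_iff_bijective).mp hxinj
      set M : Finset (V × V) := univ.image (fun v => (v, x v)) with hM
      have mem_M : ∀ p : V × V, p ∈ M ↔ x p.1 = p.2 := by
        rintro ⟨a, b⟩
        rw [hM]
        simp only [Finset.mem_image, mem_univ, true_and, Prod.mk.injEq]
        constructor
        · rintro ⟨w, rfl, rfl⟩; rfl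
        · rintro h; exact ⟨a, rfl, h⟩
      have hMB : M ⊆ B := by
        intro p hp
        obtain ⟨a, b⟩ := p
        rw [mem_M] at hp
        simp only at hp
        rw [← hp]
        exact hxB a
      set B' := B \ M with hB'
      have hout' : ∀ v, #(B'.filter fun a => a.1 = v) = j := by
        intro v
        have heq : B'.filter (fun a => a.1 = v)
            = (B.filter fun a => a.1 = v) \ {(v, x v)} := by
          ext ⟨a, b⟩
          simp only [hB', mem_filter, Finset.mem_sdiff, Finset.mem_singleton, Prod.mk.injEq]
          constructor
          · rintro ⟨⟨h1, h2⟩, h3⟩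
            refine ⟨⟨h1, h3⟩, ?_⟩
            rintro ⟨rfl, rfl⟩
            exact h2 ((mem_M _).mpr rfl)
          · rintro ⟨⟨h1, h3⟩, h2⟩
            subst h3
            refine ⟨⟨h1, fun hm => h2 ⟨rfl, ?_⟩⟩, rfl⟩
            have := (mem_M (a, b)).mp hm
            simp only at this
            exact this.symm
        rw [heq, Finset.card_sdiff_of_subset (by
          intro p hp
          rw [Finset.mem_singleton] at hp
          subst hp
          exact mem_filter.mpr ⟨hxB v, rfl⟩), hout v, Finset.card_singleton]
        omega
      have hin' : ∀ v, #(B'.filter fun a => a.2 = v) = j := by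
        intro v
        obtain ⟨w, hw⟩ := hxbij.surjective v
        have heq : B'.filter (fun a => a.2 = v)
            = (B.filter fun a => a.2 = v) \ {(w, v)} := by
          ext ⟨a, b⟩
          simp only [hB', mem_filter, Finset.mem_sdiff, Finset.mem_singleton, Prod.mk.injEq]
          constructor
          · rintro ⟨⟨h1, h2⟩, h3⟩
            refine ⟨⟨h1, h3⟩, ?_⟩
            rintro ⟨rfl, rfl⟩
            exact h2 ((mem_M _).mpr hw)
          · rintro ⟨⟨h1, h3⟩, h2⟩
            subst h3
            refine ⟨⟨h1, fun hm => ?_⟩, rfl⟩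
            have hx' := (mem_M (a, b)).mp hm
            simp only at hx'
            have : a = w := hxinj (by rw [hx', hw])
            exact h2 ⟨this, rfl⟩
        rw [heq, Finset.card_sdiff_of_subset (by
          intro p hp
          rw [Finset.mem_singleton] at hp
          subst hp
          exact mem_filter.mpr ⟨by rw [← hw]; exact hxB w, rfl⟩), hin v, Finset.card_singleton]
        omega
      -- decompose c = c₁ + c'
      set c₁ : ℤ := if c = 0 then 1 else if c = 1 then 2 else if c = -1 then -2
        else if 0 < c then 1 else -1 with hc₁def
      set c' : ℤ := c - c₁ with hc'def
      have hc₁ : c₁ = 1 ∨ c₁ = -1 ∨ c₁ = 2 ∨ c₁ = -2 := by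
        rw [hc₁def]; split_ifs <;> simp
      have hc'0 : c' ≠ 0 := by
        rw [hc'def, hc₁def]; split_ifs <;> omega
      have hc'le : c'.natAbs ≤ j := by
        rw [hc'def, hc₁def]
        split_ifs <;> omega
      obtain ⟨g', hg'1, hg'2, hg'3⟩ := ih B' hout' hin' c' (Or.inl hc'0) hc'le hj1
      refine ⟨fun a => if a ∈ M then c₁ else g' a, ?_, ?_, ?_⟩
      · intro a ha
        by_cases hm : a ∈ M
        · simpa [hm] using hc₁
        · simp only [if_neg hm]
          exact hg'1 a (by rw [hB', Finset.mem_sdiff]; exact ⟨ha, hm⟩)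
      · intro a ha
        have hm : a ∉ M := fun h => ha (hMB h)
        simp only [if_neg hm]
        exact hg'2 a (by rw [hB', Finset.mem_sdiff]; tauto)
      · intro v
        have haux : ∀ a : V × V, (if a ∈ M then c₁ else g' a)
            = g' a + (if a ∈ M then c₁ else 0) := by
          intro a
          by_cases hm : a ∈ M
          · have : g' a = 0 := hg'2 a (by rw [hB', Finset.mem_sdiff]; tauto)
            simp [hm, this]
          · simp [hm]
        simp only [haux]
        rw [show (∑ u : V, (g' (v, u) + (if (v, u) ∈ M then c₁ else 0)
              + (g' (u, v) + (if (u, v) ∈ M then c₁ else 0))))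
            = (∑ u : V, (g' (v, u) + g' (u, v)))
              + ((∑ u : V, (if (v, u) ∈ M then c₁ else 0))
              + (∑ u : V, (if (u, v) ∈ M then c₁ else 0))) by
          rw [← Finset.sum_add_distrib, ← Finset.sum_add_distrib]
          apply Finset.sum_congr rfl
          intros; ring]
        rw [hg'3 v]
        have e1 : (∑ u : V, (if (v, u) ∈ M then c₁ else 0)) = c₁ := by
          rw [Finset.sum_eq_single (x v)]
          · simp [mem_M]
          · intro u _ hu
            rw [if_neg]
            intro hm
            exact hu ((mem_M (v, u)).mp hm).symm
          · intro h; exact absurd (Finset.mem_univ _) h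
        have e2 : (∑ u : V, (if (u, v) ∈ M then c₁ else 0)) = c₁ := by
          obtain ⟨w, hw⟩ := hxbij.surjective v
          rw [Finset.sum_eq_single w]
          · simp [mem_M, hw]
          · intro u _ hu
            rw [if_neg]
            intro hm
            have := (mem_M (u, v)).mp hm
            simp only at this
            exact hu (hxinj (by rw [this, hw]))
          · intro h; exact absurd (Finset.mem_univ _) h
        rw [e1, e2, hc'def]
        ring


end Main

/-- For every even integer `r ≥ 4`, every `r`-regular graph admits a zero-sum 3-flow:
values from `{±1, ±2}` with zero sum at every vertex. -/
theorem stmt_5 {V : Type*} [Fintype V] [DecidableEq V] (G : SimpleGraph V)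
    [DecidableRel G.Adj] (r : ℕ) (hEven : Even r) (hr : 4 ≤ r)
    (hreg : G.IsRegularOfDegree r) :
    ∃ f : Sym2 V → ℤ,
      (∀ e ∈ G.edgeFinset, f e ≠ 0 ∧ (f e).natAbs ≤ 2) ∧
      (∀ v : V, ∑ e ∈ G.incidenceFinset v, f e = 0) := by
  classical
  obtain ⟨k, hk⟩ := hEven
  have hk2 : 2 ≤ k := by omega
  -- edge count
  have hcardE : #G.edgeFinset = #(univ : Finset V) * k := by
    have h1 : ∑ v : V, G.degree v = #(univ : Finset V) * r := by
      rw [Finset.sum_congr rfl fun v _ => hreg v, Finset.sum_const, smul_eq_mul]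
    have h2 := G.sum_degrees_eq_twice_card_edges
    rw [h1] at h2
    have : #(univ : Finset V) * r = #(univ : Finset V) * k + #(univ : Finset V) * k := by
      rw [hk]; ring
    omega
  -- Hall I: pick a "tail" for each edge, each vertex being the tail of exactly k edges
  set t : ↥G.edgeFinset → Finset (V × Fin k) :=
    fun e => (univ.filter fun v => v ∈ (e : Sym2 V)) ×ˢ (univ : Finset (Fin k)) with ht
  have hend2 : ∀ e : ↥G.edgeFinset, #(univ.filter fun v => v ∈ (e : Sym2 V)) = 2 := by
    rintro ⟨e, he⟩
    induction e using Sym2.ind with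
    | _ a b =>
      have hadj : G.Adj a b := by rwa [mem_edgeFinset, mem_edgeSet] at he
      have hfil : (univ.filter fun v => v ∈ (s(a, b) : Sym2 V)) = {a, b} := by
        ext v; simp [Sym2.mem_iff]
      rw [hfil, Finset.card_insert_of_notMem (by simp [hadj.ne]), Finset.card_singleton]
  have hall : ∀ S : Finset ↥G.edgeFinset, #S ≤ #(S.biUnion t) := by
    intro S
    set W := S.biUnion (fun e => univ.filter fun v => v ∈ (e : Sym2 V)) with hW
    have hbi : S.biUnion t = W ×ˢ (univ : Finset (Fin k)) := by
      ext ⟨v, i⟩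
      simp only [ht, hW, Finset.mem_biUnion, Finset.mem_product, Finset.mem_filter,
        Finset.mem_univ, true_and, and_true]
    have hcard : #(S.biUnion t) = #W * k := by
      rw [hbi, Finset.card_product, Finset.card_univ, Fintype.card_fin]
    -- double counting
    have hdc : ∑ v ∈ W, #(S.filter fun (e : ↥G.edgeFinset) => v ∈ (e : Sym2 V))
        = ∑ e ∈ S, #(W.filter fun v => v ∈ (e : Sym2 V)) := by
      simp only [Finset.card_filter]
      exact Finset.sum_comm
    have hW2 : ∀ e ∈ S, #(W.filter fun v => v ∈ (e : Sym2 V)) = 2 := by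
      intro e heS
      have hsub : (univ.filter fun v => v ∈ (e : Sym2 V)) ⊆ W := by
        intro v hv
        rw [hW, Finset.mem_biUnion]
        exact ⟨e, heS, hv⟩
      have : (W.filter fun v => v ∈ (e : Sym2 V)) = univ.filter fun v => v ∈ (e : Sym2 V) := by
        apply Finset.Subset.antisymm
        · intro v hv
          rw [Finset.mem_filter] at hv ⊢
          exact ⟨Finset.mem_univ _, hv.2⟩
        · intro v hv
          rw [Finset.mem_filter] at hv ⊢
          exact ⟨hsub (Finset.mem_filter.mpr ⟨Finset.mem_univ _, hv.2⟩), hv.2⟩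
      rw [this, hend2]
    have hdeg : ∀ v : V, #(S.filter fun (e : ↥G.edgeFinset) => v ∈ (e : Sym2 V)) ≤ r := by
      intro v
      have himg : (S.filter fun (e : ↥G.edgeFinset) => v ∈ (e : Sym2 V)).image Subtype.val
          ⊆ G.incidenceFinset v := by
        intro e he
        rw [Finset.mem_image] at he
        obtain ⟨e', he', rfl⟩ := he
        rw [Finset.mem_filter] at he'
        rw [mem_incidenceFinset]
        exact ⟨(mem_edgeFinset.mp e'.2 : _), he'.2⟩
      have := Finset.card_le_card himg
      rw [Finset.card_image_of_injective _ Subtype.val_injective,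
        card_incidenceFinset_eq_degree, hreg v] at this
      exact this
    have hineq : 2 * #S ≤ #W * r := by
      calc 2 * #S = ∑ e ∈ S, 2 := by rw [Finset.sum_const, smul_eq_mul, mul_comm]
      _ = ∑ e ∈ S, #(W.filter fun v => v ∈ (e : Sym2 V)) :=
          (Finset.sum_congr rfl fun e he => (hW2 e he).symm)
      _ = ∑ v ∈ W, #(S.filter fun (e : ↥G.edgeFinset) => v ∈ (e : Sym2 V)) := hdc.symm
      _ ≤ ∑ v ∈ W, r := Finset.sum_le_sum fun v _ => hdeg v
      _ = #W * r := by rw [Finset.sum_const, smul_eq_mul]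
    rw [hcard]
    have : 2 * #S ≤ 2 * (#W * k) := by
      calc 2 * #S ≤ #W * r := hineq
      _ = 2 * (#W * k) := by rw [hk]; ring
    exact Nat.le_of_mul_le_mul_left this (by norm_num)
  obtain ⟨F, hFinj, hFmem⟩ := (Finset.all_card_le_biUnion_card_iff_exists_injective t).mp hall
  have hFfst : ∀ e : ↥G.edgeFinset, (F e).1 ∈ (e : Sym2 V) := by
    intro e
    have := hFmem e
    rw [ht, Finset.mem_product, Finset.mem_filter] at this
    exact this.1.2
  set hd : ↥G.edgeFinset → V := fun e => Sym2.Mem.other (hFfst e) with hhd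
  have hspec : ∀ e : ↥G.edgeFinset, s((F e).1, hd e) = (e : Sym2 V) :=
    fun e => Sym2.other_spec (hFfst e)
  have hne : ∀ e : ↥G.edgeFinset, (F e).1 ≠ hd e := by
    intro e h
    have hdiag : ((e : Sym2 V)).IsDiag := by
      rw [← hspec e, Sym2.mk_isDiag_iff]
      exact h
    exact (G.not_isDiag_of_mem_edgeSet (mem_edgeFinset.mp e.2)) hdiag
  set arc : ↥G.edgeFinset → V × V := fun e => ((F e).1, hd e) with harc
  have arcinj : Function.Injective arc := by
    intro e e' h
    rw [harc] at h
    simp only [Prod.mk.injEq] at h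
    apply Subtype.ext
    rw [← hspec e, ← hspec e', h.1, h.2]
  set B : Finset (V × V) := univ.image arc with hB
  have hB_adj : ∀ p ∈ B, G.Adj p.1 p.2 := by
    rintro ⟨u, v⟩ hp
    rw [hB, Finset.mem_image] at hp
    obtain ⟨e, _, he⟩ := hp
    have : (e : Sym2 V) ∈ G.edgeSet := mem_edgeFinset.mp e.2
    rw [← hspec e] at this
    rw [harc] at he
    simp only [Prod.mk.injEq] at he
    rw [← he.1, ← he.2]
    exact (mem_edgeSet G).mp this
  -- exactly one direction of each edge is in B
  have hB_one : ∀ u v, G.Adj u v → (((u, v) ∈ B ∧ (v, u) ∉ B) ∨ ((v, u) ∈ B ∧ (u, v) ∉ B)) := by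
    intro u v hadj
    have huv : s(u, v) ∈ G.edgeFinset := by rw [mem_edgeFinset, mem_edgeSet]; exact hadj
    set e₀ : ↥G.edgeFinset := ⟨s(u, v), huv⟩ with he₀
    have hmemB : ∀ p : V × V, p ∈ B ↔ ∃ e : ↥G.edgeFinset, arc e = p := by
      intro p
      rw [hB, Finset.mem_image]
      constructor
      · rintro ⟨e, _, he⟩; exact ⟨e, he⟩
      · rintro ⟨e, he⟩; exact ⟨e, Finset.mem_univ _, he⟩
    have huniq : ∀ p : V × V, arc e₀ = p → p ∈ B := fun p hp => (hmemB p).mpr ⟨e₀, hp⟩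
    have honly : ∀ p : V × V, p ∈ B → (s(p.1, p.2) : Sym2 V) = s(u, v) → arc e₀ = p := by
      rintro ⟨a, b⟩ hp hs
      obtain ⟨e, he⟩ := (hmemB (a, b)).mp hp
      have hee : e = e₀ := by
        apply Subtype.ext
        rw [he₀]
        have h1 : (e : Sym2 V) = s(a, b) := by
          rw [← hspec e, harc] at *
          simp only [Prod.mk.injEq] at he
          rw [← he.1, ← he.2]
        simp only [h1, hs]
      rw [← hee]; exact he
    -- tail is u or v
    have htl : (F e₀).1 = u ∨ (F e₀).1 = v := by
      have := hFfst e₀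
      rw [he₀] at this
      simpa [Sym2.mem_iff] using this
    rcases htl with h | h
    · left
      have hhd : hd e₀ = v := by
        have := hspec e₀
        rw [h, he₀] at this
        exact (Sym2.congr_right.mp this)
      have harc₀ : arc e₀ = (u, v) := by rw [harc]; simp [h, hhd]
      refine ⟨huniq _ harc₀, fun hvu => ?_⟩
      have := honly (v, u) hvu (by rw [Sym2.eq_swap])
      rw [harc₀] at this
      simp only [Prod.mk.injEq] at this
      exact hadj.ne this.1
    · right
      have hhd : hd e₀ = u := by
        have hsp := hspec e₀
        rw [h, he₀] at hsp
        have h2 : s(v, hd e₀) = s(v, u) := by rw [hsp]; exact Sym2.eq_swap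
        exact Sym2.congr_right.mp h2
      have harc₀ : arc e₀ = (v, u) := by rw [harc]; simp [h, hhd]
      refine ⟨huniq _ harc₀, fun hvu => ?_⟩
      have := honly (u, v) hvu rfl
      rw [harc₀] at this
      simp only [Prod.mk.injEq] at this
      exact hadj.ne this.1.symm
  -- out-degrees
  set fib : V → Finset ↥G.edgeFinset :=
    fun v => univ.filter fun e => (F e).1 = v with hfib
  have houtcard : ∀ v, #(B.filter fun a => a.1 = v) = #(fib v) := by
    intro v
    have himg : B.filter (fun a => a.1 = v) = (fib v).image arc := by
      ext ⟨a, b⟩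
      rw [Finset.mem_filter, hB, Finset.mem_image, Finset.mem_image]
      constructor
      · rintro ⟨⟨e, _, he⟩, hv⟩
        refine ⟨e, ?_, he⟩
        rw [hfib, Finset.mem_filter]
        refine ⟨Finset.mem_univ _, ?_⟩
        rw [harc] at he
        simp only [Prod.mk.injEq] at he
        rw [he.1]
        exact hv
      · rintro ⟨e, hm, he⟩
        rw [hfib, Finset.mem_filter] at hm
        refine ⟨⟨e, Finset.mem_univ _, he⟩, ?_⟩
        rw [harc] at he
        simp only [Prod.mk.injEq] at he
        rw [← he.1]
        exact hm.2
    rw [himg, Finset.card_image_of_injective _ arcinj]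
  have hfible : ∀ v, #(fib v) ≤ k := by
    intro v
    have := Finset.card_le_card_of_injOn (fun e => (F e).2)
      (fun e _ => Finset.mem_univ ((F e).2)) (s := fib v) (t := (univ : Finset (Fin k))) ?_
    · rwa [Finset.card_univ, Fintype.card_fin] at this
    · intro e he e' he' hsnd
      rw [hfib, Finset.coe_filter] at he he'
      simp only [Set.mem_setOf_eq] at he he'
      apply hFinj
      apply Prod.ext
      · rw [he.2, he'.2]
      · exact hsnd
  have hfibsum : ∑ v : V, #(fib v) = #(univ : Finset V) * k := by
    have h1 : #(univ : Finset ↥G.edgeFinset) = ∑ v : V, #(fib v) := by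
      apply Finset.card_eq_sum_card_fiberwise (f := fun e => (F e).1)
      intro e _
      exact Finset.mem_univ _
    rw [← h1, Finset.card_univ, Fintype.card_coe, hcardE]
  have hfibeq : ∀ v, #(fib v) = k := by
    by_contra hcon
    push_neg at hcon
    obtain ⟨v₀, hv₀⟩ := hcon
    have hlt : #(fib v₀) < k := lt_of_le_of_ne (hfible v₀) hv₀
    have : ∑ v : V, #(fib v) < ∑ v : V, k :=
      Finset.sum_lt_sum (fun v _ => hfible v) ⟨v₀, Finset.mem_univ _, hlt⟩
    rw [hfibsum, Finset.sum_const, smul_eq_mul] at this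
    exact lt_irrefl _ this
  have houtB : ∀ v, #(B.filter fun a => a.1 = v) = k := fun v => by
    rw [houtcard, hfibeq]
  -- in-degrees
  set infib : V → Finset ↥G.edgeFinset :=
    fun v => univ.filter fun e => hd e = v with hinfib
  have hincard : ∀ v, #(B.filter fun a => a.2 = v) = #(infib v) := by
    intro v
    have himg : B.filter (fun a => a.2 = v) = (infib v).image arc := by
      ext ⟨a, b⟩
      rw [Finset.mem_filter, hB, Finset.mem_image, Finset.mem_image]
      constructor
      · rintro ⟨⟨e, _, he⟩, hv⟩
        refine ⟨e, ?_, he⟩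
        rw [hinfib, Finset.mem_filter]
        refine ⟨Finset.mem_univ _, ?_⟩
        rw [harc] at he
        simp only [Prod.mk.injEq] at he
        rw [he.2]
        exact hv
      · rintro ⟨e, hm, he⟩
        rw [hinfib, Finset.mem_filter] at hm
        refine ⟨⟨e, Finset.mem_univ _, he⟩, ?_⟩
        rw [harc] at he
        simp only [Prod.mk.injEq] at he
        rw [← he.2]
        exact hm.2
    rw [himg, Finset.card_image_of_injective _ arcinj]
  have hsplit : ∀ v, #(fib v) + #(infib v) = G.degree v := by
    intro v
    have hdisj : Disjoint (fib v) (infib v) := by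
      rw [Finset.disjoint_left]
      intro e he he'
      rw [hfib, Finset.mem_filter] at he
      rw [hinfib, Finset.mem_filter] at he'
      exact hne e (by rw [he.2, he'.2])
    have hcup : fib v ∪ infib v = univ.filter fun e : ↥G.edgeFinset => v ∈ (e : Sym2 V) := by
      rw [hfib, hinfib, ← Finset.filter_or]
      apply Finset.filter_congr
      intro e _
      rw [← hspec e, Sym2.mem_iff]
      simp only [eq_comm]
    have hbij : #(univ.filter fun e : ↥G.edgeFinset => v ∈ (e : Sym2 V))
        = #(G.incidenceFinset v) := by
      apply Finset.card_nbij Subtype.val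
      · intro e he
        rw [Finset.mem_coe, Finset.mem_filter] at he
        rw [Finset.mem_coe, mem_incidenceFinset]
        exact ⟨(mem_edgeFinset.mp e.2 : _), he.2⟩
      · intro e _ e' _ h
        exact Subtype.ext h
      · intro e he
        simp only [Finset.coe_filter, Finset.mem_coe, Set.mem_image, Set.mem_setOf_eq,
          Finset.mem_univ, true_and] at he ⊢
        rw [mem_incidenceFinset] at he
        exact ⟨⟨e, mem_edgeFinset.mpr he.1⟩, he.2, rfl⟩
    rw [← Finset.card_union_of_disjoint hdisj, hcup, hbij, card_incidenceFinset_eq_degree]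
  have hinB : ∀ v, #(B.filter fun a => a.2 = v) = k := by
    intro v
    have := hsplit v
    rw [hfibeq v, hreg v, hk] at this
    rw [hincard]
    omega
  -- apply the peeling lemma with total value 0
  obtain ⟨g, hg1, hg2, hg3⟩ := stepII k B houtB hinB 0 (Or.inr hk2) (by simp) (by omega)
  refine ⟨Sym2.lift ⟨fun u v => g (u, v) + g (v, u), fun u v => by ring⟩, ?_, ?_⟩
  · intro e he
    revert he
    induction e using Sym2.ind with
    | _ u v =>
      intro he
      have hadj : G.Adj u v := by rwa [mem_edgeFinset, mem_edgeSet] at he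
      have hlift : Sym2.lift ⟨fun u v => g (u, v) + g (v, u), fun u v => by ring⟩ s(u, v)
          = g (u, v) + g (v, u) := Sym2.lift_mk _ u v
      rw [hlift]
      rcases hB_one u v hadj with ⟨h1, h2⟩ | ⟨h1, h2⟩
      · have hz : g (v, u) = 0 := hg2 _ h2
        have hval := hg1 _ h1
        rw [hz]
        rcases hval with h | h | h | h <;> rw [h] <;> simp
      · have hz : g (u, v) = 0 := hg2 _ h2
        have hval := hg1 _ h1
        rw [hz]
        rcases hval with h | h | h | h <;> rw [h] <;> simp
  · intro v
    have himg : G.incidenceFinset v = (G.neighborFinset v).image (fun u => s(v, u)) := by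
      ext e
      rw [mem_incidenceFinset, Finset.mem_image]
      constructor
      · intro he
        obtain ⟨he1, he2⟩ := he
        refine ⟨Sym2.Mem.other he2, ?_, (Sym2.other_spec he2)⟩
        rw [mem_neighborFinset]
        have := he1
        rw [← Sym2.other_spec he2, mem_edgeSet] at this
        exact this
      · rintro ⟨u, hu, rfl⟩
        rw [mem_neighborFinset] at hu
        exact ⟨(mem_edgeSet G).mpr hu, Sym2.mem_mk_left v u⟩
    rw [himg, Finset.sum_image (by
      intro a _ b _ h
      exact Sym2.congr_right.mp h)]
    have hterm : ∀ u, Sym2.lift ⟨fun u v => g (u, v) + g (v, u), fun u v => by ring⟩ s(v, u)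
        = g (v, u) + g (u, v) := fun u => Sym2.lift_mk _ v u
    rw [Finset.sum_congr rfl fun u _ => hterm u]
    rw [Finset.sum_subset (Finset.subset_univ (G.neighborFinset v)) ?_]
    · rw [hg3 v]; ring
    · intro u _ hu
      rw [mem_neighborFinset] at hu
      have hz1 : g (v, u) = 0 := hg2 _ (fun hm => hu (hB_adj _ hm))
      have hz2 : g (u, v) = 0 := hg2 _ (fun hm => hu (G.adj_symm (hB_adj _ hm)))
      rw [hz1, hz2]
      ring
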